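/- Let L be a finite meet semilattice, f ∈ I(L,R), and S = {a_1,...,a_n} ⊆ L a meet-closed subset listed in a linear extension order (a_i < a_j implies i < j). Define the matrix M with entries M(a_i, a_j) = f(a_i ∧ a_j, a_i). Then det M = Π_{i=1}^n ( Σ_{d ⊴ a_i} Σ_{c ∈ L} μ(c,d)·f(c,a_i) ), where d ⊴ a_i means d ≤ a_i and d ≰ a_j for all j < i, and μ is the Möbius function of L. -/
import Mathlib

open Finset

section aux

variable {L : Type*} [Fintype L] [SemilatticeInf L] [DecidableEq L]
    [LocallyFiniteOrder L] [DecidableRel ((· ≤ ·) : L → L → Prop)]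
    {R : Type*} [CommRing R]

/-- Möbius inversion: summing `g d = ∑_c μ(c,d) f c` over all `d ≤ x` recovers `f x`. -/
lemma aux_mobius (f : L → R) (x : L) :
    ∑ d ∈ Finset.univ.filter (· ≤ x), ∑ c : L, IncidenceAlgebra.mu R c d * f c = f x := by
  rw [Finset.sum_comm]
  have key : ∀ c : L, ∑ d ∈ Finset.univ.filter (· ≤ x), IncidenceAlgebra.mu R c d
      = if c = x then 1 else 0 := by
    intro c
    rw [← IncidenceAlgebra.sum_Icc_mu_right]
    refine (Finset.sum_subset ?_ ?_).symm
    · intro d hd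
      simp only [Finset.mem_Icc] at hd
      simp [hd.2]
    · intro d hd hnot
      simp only [Finset.mem_filter, Finset.mem_univ, true_and] at hd
      have : ¬ c ≤ d := fun h => hnot (Finset.mem_Icc.2 ⟨h, hd⟩)
      exact IncidenceAlgebra.apply_eq_zero_of_not_le this _
  calc ∑ c : L, ∑ d ∈ Finset.univ.filter (· ≤ x), IncidenceAlgebra.mu R c d * f c
      = ∑ c : L, (if c = x then (1:R) else 0) * f c := by
        refine Finset.sum_congr rfl fun c _ => ?_
        rw [← Finset.sum_mul, key]
    _ = f x := by simp

end aux

theorem det_meet_closed {L : Type*} [Fintype L] [SemilatticeInf L] [DecidableEq L]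
    [LocallyFiniteOrder L] [DecidableRel ((· ≤ ·) : L → L → Prop)]
    {R : Type*} [CommRing R] (f : L → L → R) (hf : ∀ a b, ¬ a ≤ b → f a b = 0)
    (n : ℕ) (a : Fin n → L) (hinj : Function.Injective a)
    (hmeet : ∀ i j, ∃ k, a k = a i ⊓ a j)
    (hlin : ∀ i j, a i < a j → i < j) :
    Matrix.det (Matrix.of fun i j : Fin n => f (a i ⊓ a j) (a i)) =
      ∏ i : Fin n,
        ∑ d ∈ Finset.univ.filter (fun d : L => d ≤ a i ∧ ∀ j, j < i → ¬ d ≤ a j),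
          ∑ c : L, IncidenceAlgebra.mu R c d * f c (a i) := by
  classical
  set g : L → Fin n → R := fun d i => ∑ c : L, IncidenceAlgebra.mu R c d * f c (a i) with hg
  -- the two factor matrices
  set A : Matrix (Fin n) (Fin n) R := Matrix.of fun i k =>
    ∑ d ∈ Finset.univ.filter
        (fun d : L => (d ≤ a k ∧ ∀ j, j < k → ¬ d ≤ a j) ∧ d ≤ a i), g d i with hA
  set B : Matrix (Fin n) (Fin n) R := Matrix.of fun k j =>
    if a k ≤ a j then (1 : R) else 0 with hB
  -- minimal index function
  have hM : (Matrix.of fun i j : Fin n => f (a i ⊓ a j) (a i)) = A * B := by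
    ext i j
    -- minimal index of d : least k with d ≤ a k (when it exists)
    set key : L → Fin n := fun d =>
      if h : (Finset.univ.filter (fun k : Fin n => d ≤ a k)).Nonempty
      then (Finset.univ.filter (fun k : Fin n => d ≤ a k)).min' h else i with hkey
    have key_le : ∀ d : L, ∀ k : Fin n, d ≤ a k → d ≤ a (key d) ∧ key d ≤ k := by
      intro d k hdk
      have hne : (Finset.univ.filter (fun k : Fin n => d ≤ a k)).Nonempty :=
        ⟨k, by simp [hdk]⟩
      simp only [hkey, dif_pos hne]
      constructor
      · have := Finset.min'_mem _ hne
        simpa using this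
      · exact Finset.min'_le _ _ (by simp [hdk])
    have key_min : ∀ d : L, ∀ k l : Fin n, d ≤ a k → l < key d → ¬ d ≤ a l := by
      intro d k l hdk hl hdl
      exact absurd ((key_le d l hdl).2.trans_lt hl) (lt_irrefl _)
    -- entry of A * B
    have lhs : (Matrix.of fun i j : Fin n => f (a i ⊓ a j) (a i)) i j
        = ∑ d ∈ Finset.univ.filter (fun d : L => d ≤ a i ∧ d ≤ a j), g d i := by
      have := aux_mobius (fun c => f c (a i)) (a i ⊓ a j)
      simp only [Matrix.of_apply]
      rw [← this]
      apply Finset.sum_congr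
      · ext d; simp [le_inf_iff]
      · intros; rfl
    rw [lhs]
    rw [← Finset.sum_fiberwise (Finset.univ.filter (fun d : L => d ≤ a i ∧ d ≤ a j)) key
      (fun d => g d i)]
    rw [Matrix.mul_apply]
    refine Finset.sum_congr rfl fun k _ => ?_
    simp only [hA, hB, Matrix.of_apply]
    by_cases hkj : a k ≤ a j
    · rw [if_pos hkj, mul_one]
      apply Finset.sum_congr _ fun _ _ => rfl
      ext d
      simp only [Finset.mem_filter, Finset.mem_univ, true_and]
      constructor
      · rintro ⟨⟨hdi, hdj⟩, rfl⟩
        exact ⟨⟨(key_le d j hdj).1, fun l hl => key_min d j l hdj hl⟩, hdi⟩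
      · rintro ⟨⟨hdk, hmin⟩, hdi⟩
        have hdj : d ≤ a j := hdk.trans hkj
        refine ⟨⟨hdi, hdj⟩, ?_⟩
        have h1 := (key_le d k hdk).2
        rcases lt_or_eq_of_le h1 with h | h
        · exact absurd (key_le d k hdk).1 (hmin _ h)
        · exact h
    · rw [if_neg hkj, mul_zero]
      convert Finset.sum_empty
      ext d
      simp only [Finset.mem_filter, Finset.mem_univ, true_and, Finset.notMem_empty,
        iff_false, not_and]
      rintro ⟨hdi, hdj⟩ hdkey
      -- d ≤ a j and d ≤ a (key d) = a k; meet closedness forces a k ≤ a j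
      obtain ⟨m, hm⟩ := hmeet k j
      have hdk : d ≤ a k := hdkey ▸ (key_le d j hdj).1
      have hdm : d ≤ a m := hm ▸ le_inf hdk hdj
      have hmk : a m ≤ a k := hm ▸ inf_le_left
      rcases lt_or_eq_of_le hmk with h | h
      · have : m < k := hlin m k h
        exact key_min d j m hdj (hdkey ▸ this) hdm
      · exact hkj (h ▸ hm ▸ inf_le_right)
  rw [hM, Matrix.det_mul]
  have hdetB : B.det = 1 := by
    have htri : B.BlockTriangular id := by
      intro k j hjk
      simp only [hB, Matrix.of_apply, ite_eq_right_iff]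
      intro hkj
      rcases lt_or_eq_of_le hkj with h | h
      · exact absurd (hlin _ _ h) (not_lt_of_gt hjk)
      · exact absurd (hinj h) (ne_of_gt hjk)
    rw [Matrix.det_of_upperTriangular htri]
    simp [hB]
  have hdetA : A.det = ∏ i : Fin n,
      ∑ d ∈ Finset.univ.filter (fun d : L => d ≤ a i ∧ ∀ j, j < i → ¬ d ≤ a j), g d i := by
    have htri : A.BlockTriangular OrderDual.toDual := by
      intro i k hik
      have hik' : i < k := hik
      simp only [hA, Matrix.of_apply]
      convert Finset.sum_empty
      ext d
      simp only [Finset.mem_filter, Finset.mem_univ, true_and, Finset.notMem_empty,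
        iff_false, not_and]
      rintro ⟨hdk, hmin⟩ hdi
      exact hmin i hik' hdi
    rw [Matrix.det_of_lowerTriangular A htri]
    refine Finset.prod_congr rfl fun i _ => ?_
    simp only [Matrix.diag, hA, Matrix.of_apply]
    apply Finset.sum_congr _ fun _ _ => rfl
    ext d
    simp only [Finset.mem_filter, Finset.mem_univ, true_and]
    exact ⟨fun ⟨h, _⟩ => h, fun h => ⟨h, h.1⟩⟩
  rw [hdetA, hdetB, mul_one]
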